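/- Let M be a locally compact metric space and suppose M is quasi-homogeneous, i.e., there exists a compact set K ⊆ M such that for every point x ∈ M there is an isometric self-equivalence h : M ≃ᵢ M with h x ∈ K. Then M is a complete metric space. -/

import Mathlib

open Metric Filter

/-- In a locally compact metric space, around a compact set there is a uniform radius
whose closed balls are compact. -/
lemma exists_uniform_compact_closedBall {M : Type*} [MetricSpace M] [LocallyCompactSpace M]
    {K : Set M} (hK : IsCompact K) :
    ∃ r > 0, ∀ k ∈ K, IsCompact (closedBall k r) := by
  -- each point has a compact closed ball
  have h1 : ∀ k : M, ∃ ρ > 0, IsCompact (closedBall k ρ) := by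
    intro k
    obtain ⟨s, hsc, hs⟩ := exists_compact_mem_nhds k
    obtain ⟨ρ, hρ, hball⟩ := Metric.nhds_basis_closedBall.mem_iff.mp hs
    exact ⟨ρ, hρ, hsc.of_isClosed_subset isClosed_closedBall hball⟩
  choose ρ hρpos hρc using h1
  -- cover K by open balls of radius ρ k / 2
  obtain ⟨t, htK, htfin, hcov⟩ :=
    hK.elim_finite_subcover_image (fun k _ => isOpen_ball (x := k) (ε := ρ k / 2))
      (fun x hx => Set.mem_iUnion₂.mpr ⟨x, hx, by simp [half_pos (hρpos x)]⟩)
  by_cases ht : t.Nonempty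
  · haveI : t.Finite := htfin
    obtain ⟨r, hrmem, hrmin⟩ := Set.Finite.exists_minimalFor (fun k => ρ k / 2) t htfin ht
    refine ⟨ρ r / 2, half_pos (hρpos r), ?_⟩
    intro k hk
    obtain ⟨i, hi, hki⟩ := Set.mem_iUnion₂.mp (hcov hk)
    have hle : ρ r / 2 ≤ ρ i / 2 := by
      rcases le_or_gt (ρ r / 2) (ρ i / 2) with h | h
      · exact h
      · exact hrmin hi h.le
    refine (hρc i).of_isClosed_subset isClosed_closedBall ?_
    intro y hy
    have : dist y i ≤ dist y k + dist k i := dist_triangle y k i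
    have hyk : dist y k ≤ ρ r / 2 := hy
    have hki' : dist k i < ρ i / 2 := hki
    calc dist y i ≤ dist y k + dist k i := dist_triangle y k i
      _ ≤ ρ i / 2 + ρ i / 2 := add_le_add (hyk.trans hle) hki'.le
      _ = ρ i := by ring
  · -- t empty means K empty
    refine ⟨1, one_pos, ?_⟩
    intro k hk
    exfalso
    obtain ⟨i, hi, _⟩ := Set.mem_iUnion₂.mp (hcov hk)
    exact ht ⟨i, hi⟩

/-- Lemma 2.1 (metric form): a locally compact, quasi-homogeneous metric space is complete. -/
theorem quasiHomogeneous_complete {M : Type*} [MetricSpace M] [LocallyCompactSpace M]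
    (K : Set M) (hK : IsCompact K)
    (hqh : ∀ x : M, ∃ h : M ≃ᵢ M, h x ∈ K) :
    CompleteSpace M := by
  obtain ⟨r, hr, hball⟩ := exists_uniform_compact_closedBall hK
  -- every closed ball of radius r is compact
  have hcomp : ∀ x : M, IsCompact (closedBall x r) := by
    intro x
    obtain ⟨h, hx⟩ := hqh x
    have : h.symm '' closedBall (h x) r = closedBall x r := by
      rw [h.symm.image_closedBall, h.symm_apply_apply]
    rw [← this]
    exact ((hball _ hx).image h.symm.continuous)
  -- completeness via Cauchy sequences
  apply Metric.complete_of_cauchySeq_tendsto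
  intro u hu
  obtain ⟨N, hN⟩ := Metric.cauchySeq_iff'.mp hu r hr
  have hsub : ∀ n, u (n + N) ∈ closedBall (u N) r := fun n =>
    (hN (n + N) (Nat.le_add_left _ _)).le
  have hcau : CauchySeq (fun n => u (n + N)) := hu.comp_tendsto (tendsto_add_atTop_nat N)
  obtain ⟨a, -, ha⟩ :=
    cauchySeq_tendsto_of_isComplete ((hcomp (u N)).isComplete) hsub hcau
  exact ⟨a, (tendsto_add_atTop_iff_nat N).mp ha⟩
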